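/- Let A be the adjacency matrix of a strongly connected k-regular normal digraph Γ on n vertices with θ_min the minimum real part of eigenvalues of A. Suppose a coclique C attains |C| = n(−θ_min)/(k − θ_min) and exactly one eigenvalue of A has real part equal to θ_min. Then for every vertex x ∉ C, the number of y ∈ C with (x,y) ∈ E equals −θ_min. -/

import Mathlib

open Matrix Finset

section HoffmanAux
open Matrix
open scoped Matrix.Norms.L2Operator ComplexOrder

noncomputable instance matCStar (n : ℕ) : CStarAlgebra (Matrix (Fin n) (Fin n) ℂ) := { }

variable {n : ℕ}

lemma cfc_H (M : Matrix (Fin n) (Fin n) ℂ) (hM : IsStarNormal M) (θ : ℝ) :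
    cfc (fun z : ℂ => z + star z - (2*θ : ℝ)) M = M + Mᴴ - algebraMap ℂ _ ((2*θ:ℝ):ℂ) := by
  have h2 : cfc (fun z : ℂ => star z) M = star M := by
    have := cfc_star (R := ℂ) (fun z : ℂ => z) M
    rwa [cfc_id' ℂ M] at this
  have h3 : cfc (fun _ : ℂ => ((2*θ:ℝ):ℂ)) M = algebraMap ℂ _ ((2*θ:ℝ):ℂ) :=
    cfc_const _ _
  calc cfc (fun z : ℂ => z + star z - (2*θ:ℝ)) M
      = cfc (fun z : ℂ => z + star z) M - cfc (fun _ : ℂ => ((2*θ:ℝ):ℂ)) M := by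
        rw [← cfc_sub (fun z : ℂ => z + star z) (fun _ : ℂ => ((2*θ:ℝ):ℂ)) M]
    _ = M + Mᴴ - algebraMap ℂ _ ((2*θ:ℝ):ℂ) := by
        rw [cfc_add (fun z : ℂ => z) (fun z : ℂ => star z) (a := M),
          cfc_id' ℂ M, h2, h3, Matrix.star_eq_conjTranspose]

lemma herm_H (M : Matrix (Fin n) (Fin n) ℂ) (θ : ℝ) :
    (M + Mᴴ - algebraMap ℂ _ ((2*θ:ℝ):ℂ)).IsHermitian := by
  unfold Matrix.IsHermitian
  rw [Algebra.algebraMap_eq_smul_one]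
  rw [Matrix.conjTranspose_sub, Matrix.conjTranspose_add, Matrix.conjTranspose_conjTranspose,
    Matrix.conjTranspose_smul, Matrix.conjTranspose_one]
  rw [show star (((2*θ:ℝ)):ℂ) = ((2*θ:ℝ):ℂ) from by
    rw [Complex.star_def, Complex.conj_ofReal], add_comm Mᴴ M]

lemma spec_H (M : Matrix (Fin n) (Fin n) ℂ) (hM : IsStarNormal M) (θ : ℝ)
    (hle : ∀ z ∈ spectrum ℂ M, θ ≤ z.re) :
    (M + Mᴴ - algebraMap ℂ _ ((2*θ:ℝ):ℂ)).PosSemidef := by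
  have hspec : spectrum ℂ (M + Mᴴ - algebraMap ℂ _ ((2*θ:ℝ):ℂ))
      = (fun z : ℂ => z + star z - (2*θ:ℝ)) '' spectrum ℂ M := by
    rw [← cfc_H M hM θ]
    exact cfc_map_spectrum _ M
  have hherm := herm_H M θ
  refine hherm.posSemidef_iff_eigenvalues_nonneg.mpr fun i => ?_
  have hmem : (hherm.eigenvalues i : ℝ) ∈ spectrum ℝ (M + Mᴴ - algebraMap ℂ _ ((2*θ:ℝ):ℂ)) := by
    rw [hherm.spectrum_real_eq_range_eigenvalues]; exact ⟨i, rfl⟩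
  rw [← spectrum.algebraMap_mem_iff ℂ, hspec] at hmem
  obtain ⟨z, hz, hz2⟩ := hmem
  have h4 : ((2*z.re - 2*θ : ℝ) : ℂ) = algebraMap ℝ ℂ (hherm.eigenvalues i) := by
    rw [← hz2]
    simp only [Complex.star_def, Complex.add_conj]
    push_cast; ring
  rw [Complex.coe_algebraMap] at h4
  have h5 := Complex.ofReal_injective h4
  rw [← h5]
  show (0:ℝ) ≤ _
  nlinarith [hle z hz]

lemma eig_shift (M : Matrix (Fin n) (Fin n) ℂ) (hM : IsStarNormal M) (θ : ℝ)
    (huniq : ∀ z ∈ spectrum ℂ M, z.re = θ → z = (θ:ℂ))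
    (w : Fin n → ℂ) (hw : (M + Mᴴ - algebraMap ℂ _ ((2*θ:ℝ):ℂ)) *ᵥ w = 0) :
    M *ᵥ w = (θ:ℂ) • w := by
  classical
  set f : ℂ → ℂ := fun z => z + star z - (2*θ:ℝ) with hf
  set g : ℂ → ℂ := fun z => if z = (θ:ℂ) then 0 else (z - θ) / f z with hg
  have hfin : (spectrum ℂ M).Finite := M.finite_spectrum
  have hgf : ∀ z ∈ spectrum ℂ M, g z * f z = z - θ := by
    intro z hz
    by_cases h : z = (θ:ℂ)
    · simp [hg, h]
    · have hfz : f z ≠ 0 := by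
        intro h0
        apply h
        apply huniq z hz
        have : z + star z = ((2*θ:ℝ):ℂ) := by
          have := sub_eq_zero.mp h0; exact this
        rw [Complex.star_def, Complex.add_conj] at this
        have := Complex.ofReal_injective this
        push_cast at this ⊢; linarith
      simp only [hg, if_neg h]
      field_simp
  have hmul : cfc g M * cfc f M = M - algebraMap ℂ _ ((θ:ℝ):ℂ) := by
    rw [← cfc_mul g f M (hfin.continuousOn g) (by fun_prop)]
    rw [cfc_congr (g := fun z : ℂ => z - ((θ:ℝ):ℂ)) hgf]
    rw [cfc_sub (fun z : ℂ => z) (fun _ : ℂ => ((θ:ℝ):ℂ)) M, cfc_id' ℂ M, cfc_const _ _]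
  have h0 : (M - algebraMap ℂ _ ((θ:ℝ):ℂ)) *ᵥ w = 0 := by
    rw [← hmul, ← Matrix.mulVec_mulVec, cfc_H M hM θ, hw, Matrix.mulVec_zero]
  rw [Matrix.sub_mulVec, sub_eq_zero] at h0
  rw [h0, Algebra.algebraMap_eq_smul_one, Matrix.smul_mulVec, Matrix.one_mulVec]

lemma root_mem_spectrum (M : Matrix (Fin n) (Fin n) ℂ) (z : ℂ)
    (hz : z ∈ M.charpoly.roots) : z ∈ spectrum ℂ M := by
  have hroot : M.charpoly.eval z = 0 := by
    have := Polynomial.isRoot_of_mem_roots hz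
    exact this
  have hdet : M.charpoly.eval z = (Matrix.scalar (Fin n) z - M).det := by
    rw [Matrix.charpoly, eval_det, matPolyEquiv_charmatrix]
    simp
  rw [spectrum.mem_iff]
  rw [Matrix.isUnit_iff_isUnit_det, isUnit_iff_ne_zero]
  simp only [ne_eq, not_not]
  rw [← hroot, hdet]
  congr 1

lemma theta_nonpos (hn : 0 < n) (M : Matrix (Fin n) (Fin n) ℂ) (htr : M.trace = 0)
    (θ : ℝ) (hle : ∀ z ∈ spectrum ℂ M, θ ≤ z.re) : θ ≤ 0 := by
  by_contra h
  push_neg at h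
  have hcard : M.charpoly.roots.card = n := by
    have h1 := (Polynomial.splits_iff_card_roots.mp (IsAlgClosed.splits M.charpoly))
    rwa [Matrix.charpoly_natDegree_eq_dim, Fintype.card_fin] at h1
  have hsum : M.charpoly.roots.sum = 0 := by
    rw [← Matrix.trace_eq_sum_roots_charpoly, htr]
  have hre : ((M.charpoly.roots.map Complex.re).sum : ℝ) = 0 := by
    have : (M.charpoly.roots.map Complex.re).sum = (M.charpoly.roots.sum).re := by
      induction M.charpoly.roots using Multiset.induction with
      | empty => simp
      | cons a s ih => simp [ih]
    rw [this, hsum, Complex.zero_re]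
  have hbound : (M.charpoly.roots.map Complex.re).card • θ
      ≤ (M.charpoly.roots.map Complex.re).sum := by
    apply Multiset.card_nsmul_le_sum
    intro x hx
    obtain ⟨z, hz, rfl⟩ := Multiset.mem_map.mp hx
    exact hle z (root_mem_spectrum M z hz)
  rw [hre, Multiset.card_map, hcard] at hbound
  have : (0:ℝ) < n • θ := by
    rw [nsmul_eq_mul]
    positivity
  linarith

end HoffmanAux

/-- Equality case of Hoffman's coclique bound when exactly one eigenvalue has
minimal real part: every vertex outside the coclique has exactly `-θmin`
out-neighbours in the coclique. -/
theorem hoffman_coclique_bound_equality_unique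
    (N : ℕ) (k θmin : ℝ) (A : Matrix (Fin N) (Fin N) ℝ)
    (h01 : ∀ i j, A i j = 0 ∨ A i j = 1)
    (hdiag : ∀ i, A i i = 0)
    (hnormal : A * Aᵀ = Aᵀ * A)
    (hrow : ∀ i, ∑ j, A i j = k)
    (hcol : ∀ i, ∑ j, A j i = k)
    (hconn : ∀ i j : Fin N, Relation.ReflTransGen (fun x y => A x y = 1) i j)
    (hedge : ∃ i j, A i j = 1)
    (hmin_mem : ∃ θ ∈ spectrum ℂ (A.map Complex.ofReal), θ.re = θmin)
    (hmin_le : ∀ θ ∈ spectrum ℂ (A.map Complex.ofReal), θmin ≤ θ.re)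
    (huniq : ∀ θ ∈ spectrum ℂ (A.map Complex.ofReal), θ.re = θmin → θ = (θmin : ℂ))
    (C : Finset (Fin N))
    (hC : ∀ x ∈ C, ∀ y ∈ C, A x y = 0)
    (heq : (C.card : ℝ) = (N : ℝ) * (-θmin) / (k - θmin)) :
    ∀ x ∉ C, ∑ y ∈ C, A x y = -θmin := by
  intro x hx
  classical
  have hN : 0 < N := x.pos
  have hNR : (0:ℝ) < N := by exact_mod_cast hN
  set M : Matrix (Fin N) (Fin N) ℂ := A.map Complex.ofReal with hM
  have hMstar : Mᴴ = Aᵀ.map Complex.ofReal := by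
    ext i j
    simp [hM, Matrix.conjTranspose_apply, Matrix.map_apply, Matrix.transpose_apply,
      Complex.conj_ofReal]
  have hmapmul : ∀ X Y : Matrix (Fin N) (Fin N) ℝ,
      (X * Y).map Complex.ofReal = X.map Complex.ofReal * Y.map Complex.ofReal := by
    intro X Y
    ext i j
    simp [Matrix.map_apply, Matrix.mul_apply]
  have hMnormal : IsStarNormal M := by
    constructor
    rw [Commute, SemiconjBy, Matrix.star_eq_conjTranspose, hMstar, hM,
      ← hmapmul, ← hmapmul, hnormal]
  -- θmin ≤ 0 < 1 ≤ k
  obtain ⟨i0, j0, hij0⟩ := hedge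
  have hA_nonneg : ∀ i j, 0 ≤ A i j := by
    intro i j; rcases h01 i j with h | h <;> rw [h] <;> norm_num
  have hk1 : (1:ℝ) ≤ k := by
    rw [← hrow i0]
    calc (1:ℝ) = A i0 j0 := hij0.symm
    _ ≤ ∑ j, A i0 j := Finset.single_le_sum (fun j _ => hA_nonneg i0 j) (Finset.mem_univ j0)
  have hMtrace : M.trace = 0 := by
    simp [Matrix.trace, hM, Matrix.diag, Matrix.map_apply, hdiag]
  have hθ0 : θmin ≤ 0 := theta_nonpos hN M hMtrace θmin hmin_le
  have hkθ : (0:ℝ) < k - θmin := by linarith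
  set c : ℝ := (C.card : ℝ) with hcdef
  have hc : c * (k - θmin) = N * (-θmin) := by
    rw [heq]; field_simp
  set a : ℝ := c / N with hadef
  have haN : a * N = c := by rw [hadef]; field_simp
  have haθ : a * (k - θmin) = -θmin := by
    rw [hadef, div_mul_eq_mul_div, hc]; field_simp
  set χ : Fin N → ℝ := fun i => if i ∈ C then 1 else 0 with hχ
  set v : Fin N → ℝ := fun i => χ i - a with hv
  have hvi : ∀ i, v i = χ i - a := fun i => rfl
  have hχi : ∀ i, χ i = if i ∈ C then 1 else 0 := fun i => rfl
  have hchi : ∀ G : Fin N → ℝ, ∑ i, χ i * G i = ∑ i ∈ C, G i := by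
    intro G
    have h1 : ∀ i, χ i * G i = if i ∈ C then G i else 0 := by
      intro i; rw [hχi i, ite_mul, one_mul, zero_mul]
    rw [Finset.sum_congr rfl fun i _ => h1 i, Finset.sum_ite_mem, Finset.univ_inter]
  have hchisum : ∑ i, χ i = c := by
    have := hchi (fun _ => 1)
    simpa using this
  have hquad : ∀ F : Matrix (Fin N) (Fin N) ℝ, (∀ x ∈ C, ∀ y ∈ C, F x y = 0) →
      (∀ i, ∑ j, F i j = k) → (∀ i, ∑ j, F j i = k) →
      ∑ i, ∑ j, v i * (F i j * v j) = a^2*N*k - 2*a*c*k := by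
    intro F h0 hr hcl
    have T1 : ∑ i, ∑ j, χ i * (χ j * F i j) = 0 := by
      have step : ∀ i, ∑ j, χ i * (χ j * F i j) = χ i * ∑ j ∈ C, F i j := by
        intro i
        rw [← Finset.mul_sum, hchi (fun j => F i j)]
      rw [Finset.sum_congr rfl fun i _ => step i, hchi (fun i => ∑ j ∈ C, F i j)]
      exact Finset.sum_eq_zero fun i hi => Finset.sum_eq_zero fun j hj => h0 i hi j hj
    have T2 : ∑ i, ∑ j, χ i * F i j = c * k := by
      have step : ∀ i, ∑ j, χ i * F i j = χ i * k := by
        intro i; rw [← Finset.mul_sum, hr]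
      rw [Finset.sum_congr rfl fun i _ => step i, hchi (fun _ => k), Finset.sum_const,
        nsmul_eq_mul]
    have T3 : ∑ i, ∑ j, F i j * χ j = c * k := by
      rw [Finset.sum_comm]
      have step : ∀ j, ∑ i, F i j * χ j = χ j * k := by
        intro j; rw [← Finset.sum_mul, hcl, mul_comm]
      rw [Finset.sum_congr rfl fun j _ => step j, hchi (fun _ => k), Finset.sum_const,
        nsmul_eq_mul]
    have T4 : ∑ i, ∑ j, F i j = N * k := by
      rw [Finset.sum_congr rfl fun i (_ : i ∈ Finset.univ) => hr i, Finset.sum_const,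
        Finset.card_univ, Fintype.card_fin, nsmul_eq_mul]
    calc ∑ i, ∑ j, v i * (F i j * v j)
        = ∑ i, ∑ j, (χ i * (χ j * F i j) - a * (χ i * F i j) - a * (F i j * χ j)
            + a^2 * F i j) := by
          refine Finset.sum_congr rfl fun i _ => Finset.sum_congr rfl fun j _ => ?_
          rw [hvi i, hvi j]; ring
      _ = (∑ i, ∑ j, χ i * (χ j * F i j)) - a * (∑ i, ∑ j, χ i * F i j)
          - a * (∑ i, ∑ j, F i j * χ j) + a^2 * (∑ i, ∑ j, F i j) := by
          simp [Finset.sum_add_distrib, Finset.sum_sub_distrib, Finset.mul_sum]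
      _ = 0 - a * (c*k) - a * (c*k) + a^2 * (N*k) := by rw [T1, T2, T3, T4]
      _ = a^2*N*k - 2*a*c*k := by ring
  have hχsq : ∀ i, χ i * χ i = χ i := by
    intro i; rw [hχi i]; split_ifs <;> norm_num
  have hsq : ∑ i, v i ^ 2 = c - 2*a*c + a^2*N := by
    calc ∑ i, v i ^ 2 = ∑ i, (χ i - 2*a*χ i + a^2) := by
          refine Finset.sum_congr rfl fun i _ => ?_
          have h2 : v i ^ 2 = χ i * χ i - 2*a*χ i + a^2 := by rw [hvi i]; ring
          rw [h2, hχsq i]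
      _ = c - 2*a*c + a^2*N := by
          rw [Finset.sum_add_distrib, Finset.sum_sub_distrib, hchisum, ← Finset.mul_sum,
            hchisum, Finset.sum_const, Finset.card_univ, Fintype.card_fin, nsmul_eq_mul]
          ring
  -- quadratic form value for P := A + Aᵀ - 2θ•1
  have QA := hquad A hC hrow hcol
  have QAT := hquad Aᵀ (fun x hx y hy => hC y hy x hx)
    (fun i => by simpa using hcol i) (fun i => by simpa using hrow i)
  set P : Matrix (Fin N) (Fin N) ℝ := A + Aᵀ - (2*θmin) • (1 : Matrix (Fin N) (Fin N) ℝ)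
    with hP
  have hQ : v ⬝ᵥ (P *ᵥ v) = 0 := by
    have hsq' : ∑ i, v i * v i = c - 2*a*c + a^2*N := by
      rw [← hsq]
      exact Finset.sum_congr rfl fun i _ => (sq (v i)).symm
    have hexp : v ⬝ᵥ (P *ᵥ v)
        = (∑ i, ∑ j, v i * (A i j * v j)) + (∑ i, ∑ j, v i * (Aᵀ i j * v j))
          - 2*θmin * ∑ i, v i * v i := by
      simp only [dotProduct, Matrix.mulVec, hP, Matrix.sub_apply, Matrix.add_apply,
        Matrix.smul_apply, Matrix.one_apply, smul_eq_mul]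
      have step : ∀ i, v i * (∑ j, (A i j + Aᵀ i j - 2*θmin * (if i = j then 1 else 0)) * v j)
          = (∑ j, v i * (A i j * v j)) + (∑ j, v i * (Aᵀ i j * v j))
            - 2*θmin * (v i * v i) := by
        intro i
        rw [Finset.mul_sum]
        have h1 : ∀ j, v i * ((A i j + Aᵀ i j - 2*θmin * (if i = j then 1 else 0)) * v j)
            = v i * (A i j * v j) + v i * (Aᵀ i j * v j)
              - (if i = j then 2*θmin * (v i * v j) else 0) := by
          intro j; split_ifs <;> ring
        rw [Finset.sum_congr rfl fun j _ => h1 j, Finset.sum_sub_distrib,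
          Finset.sum_add_distrib, Finset.sum_ite_eq]
        simp
      rw [Finset.sum_congr rfl fun i _ => step i, Finset.sum_sub_distrib,
        Finset.sum_add_distrib, ← Finset.mul_sum]
    rw [hexp, QA, QAT, hsq']
    linear_combination (2*a*k - 2*θmin*a) * haN + (-2*c) * haθ
  -- pass to ℂ
  set w : Fin N → ℂ := fun i => ((v i : ℝ) : ℂ) with hw
  have hHmat : M + Mᴴ - algebraMap ℂ _ ((2*θmin:ℝ):ℂ) = P.map Complex.ofReal := by
    rw [hMstar, Algebra.algebraMap_eq_smul_one, hP]
    ext i j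
    simp only [Matrix.sub_apply, Matrix.add_apply, Matrix.smul_apply, Matrix.one_apply,
      Matrix.map_apply, hM, Matrix.transpose_apply, smul_eq_mul]
    push_cast
    split_ifs <;> simp
  have hPw : (P.map Complex.ofReal) *ᵥ w = fun i => (((P *ᵥ v) i : ℝ) : ℂ) := by
    ext i
    simp only [Matrix.mulVec, dotProduct, Matrix.map_apply, hw]
    push_cast
    rfl
  have hdot0 : star w ⬝ᵥ ((M + Mᴴ - algebraMap ℂ _ ((2*θmin:ℝ):ℂ)) *ᵥ w) = 0 := by
    rw [hHmat, hPw]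
    have hstar : star w = w := by
      ext i; simp [hw, Complex.conj_ofReal]
    rw [hstar]
    have : w ⬝ᵥ (fun i => (((P *ᵥ v) i : ℝ) : ℂ)) = ((v ⬝ᵥ (P *ᵥ v) : ℝ) : ℂ) := by
      simp only [dotProduct, hw]
      push_cast
      rfl
    rw [this, hQ, Complex.ofReal_zero]
  have hpsd := spec_H M hMnormal θmin hmin_le
  have hker : (M + Mᴴ - algebraMap ℂ _ ((2*θmin:ℝ):ℂ)) *ᵥ w = 0 :=
    (hpsd.dotProduct_mulVec_zero_iff w).mp hdot0
  have hMw : M *ᵥ w = (θmin:ℂ) • w := eig_shift M hMnormal θmin huniq w hker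
  have hAv : ∀ i, (A *ᵥ v) i = θmin * v i := by
    intro i
    have h1 := congrFun hMw i
    have h2 : (M *ᵥ w) i = (((A *ᵥ v) i : ℝ) : ℂ) := by
      simp only [Matrix.mulVec, dotProduct, hM, Matrix.map_apply, hw]
      push_cast
      rfl
    have h3 : ((θmin:ℂ) • w) i = ((θmin * v i : ℝ) : ℂ) := by
      simp [hw]
    rw [h2, h3] at h1
    exact_mod_cast h1
  -- final computation
  have hfin := hAv x
  have hvx : v x = -a := by rw [hvi x, hχi x, if_neg hx]; ring
  have hAvx : (A *ᵥ v) x = (∑ y ∈ C, A x y) - a * k := by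
    simp only [Matrix.mulVec, dotProduct]
    have : ∀ j, A x j * v j = χ j * A x j - a * A x j := by
      intro j; rw [hvi j]; ring
    rw [Finset.sum_congr rfl fun j _ => this j, Finset.sum_sub_distrib,
      hchi (fun j => A x j), ← Finset.mul_sum, hrow]
  rw [hAvx, hvx] at hfin
  have : ∑ y ∈ C, A x y = a * (k - θmin) := by linarith
  rw [this, haθ]
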